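/- There exists a deterministic strategy such that for every constant β < 2π there exist ε > 0 and c > 0 with the following property: for every real D > 1, every treasure location z ∈ ℝ² with ‖z‖ ≤ D, and every adversary all of whose hints are angular sectors of angle at most β containing z with apex at the agent's current position, the run of the strategy against z and this adversary reaches a point at distance at most 1 from z, and the total length of the agent's trajectory up to that moment is at most c·D^{2−ε}. -/

import Mathlib

open Real

noncomputable section

/-- Points of the Euclidean plane. -/
abbrev Pt := EuclideanSpace ℝ (Fin 2)

/-- The unit vector in direction angle `a`. -/
def unitDir (a : ℝ) : Pt := WithLp.toLp 2 ![Real.cos a, Real.sin a]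

/-- The closed angular sector with apex `p`, swept clockwise from the half-line in
direction angle `a` through angle `θ` (it consists of the points lying on the
half-lines from `p` in the direction angles `a - t` for `0 ≤ t ≤ θ`, including
both bounding half-lines). -/
def sector (p : Pt) (a θ : ℝ) : Set Pt :=
  {q | ∃ r : ℝ, 0 ≤ r ∧ ∃ t : ℝ, 0 ≤ t ∧ t ≤ θ ∧ q = p + r • unitDir (a - t)}

/-- A hint: an angular sector given by its apex, its starting direction angle and
its angle. -/
structure Hint where
  apex : Pt
  start : ℝ
  angle : ℝ

/-- The set of points of a hint. -/
def Hint.set (h : Hint) : Set Pt := sector h.apex h.start h.angle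

/-- The history of hints received after `n` hints have been supplied by adversary `adv`. -/
def hist (adv : List Hint → Hint) : ℕ → List Hint
  | 0 => []
  | n + 1 => hist adv n ++ [adv (hist adv n)]

/-- The position of the agent using strategy `strat` against adversary `adv` at the moment
it receives the `n`-th hint: it starts at the origin, and after receiving `n+1` hints it
moves to the point prescribed by the strategy applied to the hints received so far. -/
def pos (strat : List Hint → Pt) (adv : List Hint → Hint) : ℕ → Pt
  | 0 => 0
  | n + 1 => strat (hist adv (n + 1))

/-- The `n`-th hint supplied by the adversary. -/
def hint (adv : List Hint → Hint) (n : ℕ) : Hint := adv (hist adv n)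

/-- The adversary `adv` is valid against strategy `strat` for treasure `z`, with all
angles of hints belonging to `Θ`: each hint has its apex at the agent's current position,
its angle lies in `Θ`, and it contains the treasure. -/
def ValidAdv (strat : List Hint → Pt) (adv : List Hint → Hint) (z : Pt) (Θ : Set ℝ) : Prop :=
  ∀ n : ℕ, (hint adv n).apex = pos strat adv n ∧ (hint adv n).angle ∈ Θ ∧ z ∈ (hint adv n).set

/-- The length of the agent's trajectory from the origin up to the point `q` reached
during its `n`-th move (from `pos n` towards `pos (n+1)`). -/
def cost (strat : List Hint → Pt) (adv : List Hint → Hint) (n : ℕ) (q : Pt) : ℝ :=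
  (∑ i ∈ Finset.range n, dist (pos strat adv i) (pos strat adv (i + 1))) +
    dist (pos strat adv n) q

/-- The agent finds the treasure `z` at total trajectory length at most `c`: at some moment
of the run its position is within distance 1 of `z`, the length of the trajectory up to
this moment being at most `c`. -/
def Finds (strat : List Hint → Pt) (adv : List Hint → Hint) (z : Pt) (c : ℝ) : Prop :=
  ∃ n : ℕ, ∃ q ∈ segment ℝ (pos strat adv n) (pos strat adv (n + 1)),
    dist q z ≤ 1 ∧ cost strat adv n q ≤ c

-- ============================ our development ============================

namespace TH

open scoped Classical

/-- A square: (center, side). -/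
abbrev Sq := Pt × ℝ

/-- The closed axis-parallel square with given center and side. -/
def box (Q : Sq) : Set Pt := {q | |q 0 - Q.1 0| ≤ Q.2 / 2 ∧ |q 1 - Q.1 1| ≤ Q.2 / 2}

/-- Center of the `(i,j)` subsquare when subdividing `Q` into a `k × k` grid. -/
def subCtr (Q : Sq) (k i j : ℕ) : Pt :=
  WithLp.toLp 2 ![Q.1 0 - Q.2 / 2 + Q.2 / k * (i + 1/2), Q.1 1 - Q.2 / 2 + Q.2 / k * (j + 1/2)]

/-- The list of subsquares of the `k × k` subdivision of `Q`. -/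
def subs (Q : Sq) (k : ℕ) : List Sq :=
  (List.range (k * k)).map fun t => ((subCtr Q k (t % k) (t / k)), Q.2 / k)

/-- Subdivision parameter extracted from the hint angle. -/
def kOf (θ : ℝ) : ℕ := 7 ⊔ ((⌈4 * Real.sqrt 2 / Real.sin (max θ π / 2)⌉).toNat + 1)

/-- Surviving subsquares after a hint at the center of `Q`. -/
def children (Q : Sq) (h : Hint) : List Sq :=
  if Q.2 ≤ Real.sqrt 2 then []
  else (subs Q (kOf h.angle)).filter fun Q' => decide (¬ Disjoint (box Q') h.set)

/-- The big square of phase `j`. -/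
def bigSq (j : ℕ) : Sq := ((0 : Pt), 2 ^ (j + 2))

abbrev St := ℕ × List Sq

def step : St → Hint → St
  | (j, []), _ => (j + 1, [bigSq (j + 1)])
  | (j, Q :: rest), h => (j, children Q h ++ rest)

def target : St → Pt
  | (_, []) => 0
  | (_, Q :: _) => Q.1

def st0 : St := (0, [bigSq 0])

/-- The strategy. -/
def myStrat (l : List Hint) : Pt := target (l.foldl step st0)

-- ===================== basic coordinate lemmas =====================

lemma pt_add (p q : Pt) (i : Fin 2) : (p + q) i = p i + q i := rfl
lemma pt_smul (r : ℝ) (p : Pt) (i : Fin 2) : (r • p) i = r * p i := rfl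
lemma unitDir0 (a : ℝ) : unitDir a 0 = Real.cos a := rfl
lemma unitDir1 (a : ℝ) : unitDir a 1 = Real.sin a := rfl
lemma pt_zero (i : Fin 2) : (0 : Pt) i = 0 := rfl

lemma dist_pt (p q : Pt) : dist p q = Real.sqrt ((p 0 - q 0)^2 + (p 1 - q 1)^2) := by
  rw [EuclideanSpace.dist_eq, Fin.sum_univ_two]
  simp [Real.dist_eq, sq_abs]

lemma coord_le_norm (z : Pt) (i : Fin 2) : |z i| ≤ ‖z‖ := by
  have h := EuclideanSpace.norm_eq z
  rw [Fin.sum_univ_two] at h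
  rw [h]
  fin_cases i
  · show |z 0| ≤ _
    rw [show |z 0| = Real.sqrt (|z 0|^2) from (Real.sqrt_sq (abs_nonneg _)).symm]
    apply Real.sqrt_le_sqrt
    simp only [Real.norm_eq_abs, sq_abs]
    nlinarith [sq_abs (z 0), sq_abs (z 1), sq_nonneg (z 1)]
  · show |z 1| ≤ _
    rw [show |z 1| = Real.sqrt (|z 1|^2) from (Real.sqrt_sq (abs_nonneg _)).symm]
    apply Real.sqrt_le_sqrt
    simp only [Real.norm_eq_abs, sq_abs]
    nlinarith [sq_abs (z 0), sq_abs (z 1), sq_nonneg (z 0)]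

lemma dist_le_of_coords {p q : Pt} {M : ℝ} (h0 : |p 0 - q 0| ≤ M) (h1 : |p 1 - q 1| ≤ M) :
    dist p q ≤ Real.sqrt 2 * M := by
  have hM : 0 ≤ M := le_trans (abs_nonneg _) h0
  rw [dist_pt]
  have h2 : (p 0 - q 0)^2 + (p 1 - q 1)^2 ≤ 2 * M^2 := by
    nlinarith [sq_abs (p 0 - q 0), sq_abs (p 1 - q 1), abs_nonneg (p 0 - q 0),
      abs_nonneg (p 1 - q 1)]
  calc Real.sqrt ((p 0 - q 0)^2 + (p 1 - q 1)^2) ≤ Real.sqrt (2 * M^2) :=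
        Real.sqrt_le_sqrt h2
    _ = Real.sqrt 2 * M := by
        rw [Real.sqrt_mul (by norm_num), Real.sqrt_sq hM]

-- ===================== sector geometry =====================

lemma sector_mono (p : Pt) (a : ℝ) {θ θ' : ℝ} (h : θ ≤ θ') : sector p a θ ⊆ sector p a θ' := by
  rintro q ⟨r, hr, t, ht0, htθ, rfl⟩
  exact ⟨r, hr, t, ht0, le_trans htθ h, rfl⟩

/-- Key clearance lemma: the point at distance `ρ` from the apex in the direction of the
middle of the complementary cone is at distance at least `ρ sin (θ/2)` from the sector. -/
lemma sector_clearance (p : Pt) (a θ ρ : ℝ) (hθ1 : π ≤ θ) (hθ2 : θ < 2*π) (hρ : 0 ≤ ρ)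
    {q : Pt} (hq : q ∈ sector p a θ) :
    ρ * Real.sin (θ/2) ≤ dist q (p + ρ • unitDir (a + π - θ/2)) := by
  obtain ⟨r, hr, t, ht0, htθ, rfl⟩ := hq
  set φ := a - t with hφ
  set m := a + π - θ/2 with hm
  have h0 : (p + r • unitDir φ) 0 - (p + ρ • unitDir m) 0 = r * Real.cos φ - ρ * Real.cos m := by
    simp only [pt_add, pt_smul, unitDir0]; ring
  have h1 : (p + r • unitDir φ) 1 - (p + ρ • unitDir m) 1 = r * Real.sin φ - ρ * Real.sin m := by
    simp only [pt_add, pt_smul, unitDir1]; ring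
  rw [dist_pt, h0, h1]
  have hexp : (r * Real.cos φ - ρ * Real.cos m)^2 + (r * Real.sin φ - ρ * Real.sin m)^2
      = r^2 + ρ^2 - 2*r*ρ*(Real.cos φ * Real.cos m + Real.sin φ * Real.sin m) := by
    have e1 := Real.sin_sq_add_cos_sq φ
    have e2 := Real.sin_sq_add_cos_sq m
    linear_combination (r^2) * e1 + (ρ^2) * e2
  have hcs : Real.cos φ * Real.cos m + Real.sin φ * Real.sin m = Real.cos (φ - m) :=
    (Real.cos_sub φ m).symm
  have hφm : φ - m = (θ/2 - t) - π := by rw [hφ, hm]; ring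
  have hcos1 : Real.cos (φ - m) = - Real.cos (θ/2 - t) := by
    rw [hφm, Real.cos_sub_pi]
  have hmono : Real.cos (θ/2) ≤ Real.cos (θ/2 - t) := by
    have habs : |θ/2 - t| ≤ θ/2 := by
      rw [abs_le]; constructor <;> linarith
    calc Real.cos (θ/2) ≤ Real.cos |θ/2 - t| := by
          apply Real.cos_le_cos_of_nonneg_of_le_pi (abs_nonneg _) (by nlinarith) habs
      _ = Real.cos (θ/2 - t) := Real.cos_abs _
  have hs : 0 ≤ Real.sin (θ/2) := by
    apply Real.sin_nonneg_of_nonneg_of_le_pi <;> nlinarith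
  have hsc := Real.sin_sq_add_cos_sq (θ/2)
  have hkey : (ρ * Real.sin (θ/2))^2 ≤ r^2 + ρ^2 - 2*r*ρ*Real.cos (φ - m) := by
    rw [hcos1]
    nlinarith [sq_nonneg (r + ρ * Real.cos (θ/2)), mul_nonneg hr hρ, hmono]
  calc ρ * Real.sin (θ/2) = Real.sqrt ((ρ * Real.sin (θ/2))^2) :=
        (Real.sqrt_sq (mul_nonneg hρ hs)).symm
    _ ≤ Real.sqrt ((r * Real.cos φ - ρ * Real.cos m)^2 + (r * Real.sin φ - ρ * Real.sin m)^2) := by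
        apply Real.sqrt_le_sqrt; rw [hexp, hcs]; exact hkey


-- ===================== subdivision =====================

/-- 1-D covering lemma. -/
lemma oneD {x y : ℝ} {k : ℕ} (hk : 0 < k) (hx : 0 ≤ x) (hy0 : 0 ≤ y) (hyx : y ≤ x) :
    ∃ i : ℕ, i < k ∧ |y - x / k * (i + 1/2)| ≤ x / (2*k) := by
  have hkR : (0:ℝ) < k := by exact_mod_cast hk
  rcases eq_or_lt_of_le hx with hx0 | hx0
  · refine ⟨0, hk, ?_⟩
    have : y = 0 := le_antisymm (by linarith) hy0
    rw [this, ← hx0]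
    simp
  · -- choose i
    set t : ℝ := y * k / x with ht
    have ht0 : 0 ≤ t := by positivity
    have htk : t ≤ k := by
      rw [ht, div_le_iff₀ hx0]
      calc y * k ≤ x * k := by nlinarith
        _ = (k:ℝ) * x := by ring
    refine ⟨min (k-1) ⌊t⌋₊, by omega, ?_⟩
    set i : ℕ := min (k-1) ⌊t⌋₊ with hi
    have hsandwich : x / k * i ≤ y ∧ y ≤ x / k * (i + 1) := by
      have hxk : 0 < x / k := by positivity
      have hyt : y = x / k * t := by rw [ht]; field_simp
      rcases le_or_gt ⌊t⌋₊ (k-1) with hcase | hcase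
      · have hieq : i = ⌊t⌋₊ := by omega
        constructor
        · rw [hyt]
          have : (i:ℝ) ≤ t := by rw [hieq]; exact_mod_cast Nat.floor_le ht0
          nlinarith
        · rw [hyt]
          have : t ≤ (i:ℝ) + 1 := by
            rw [hieq]; exact le_of_lt (Nat.lt_floor_add_one t)
          nlinarith
      · have hieq : i = k - 1 := by omega
        have hik : (i:ℝ) + 1 = k := by
          rw [hieq]; push_cast [Nat.cast_sub hk]; ring
        constructor
        · rw [hyt]
          have h1 : (k:ℝ) ≤ ⌊t⌋₊ := by exact_mod_cast by omega
          have h2 : (⌊t⌋₊:ℝ) ≤ t := Nat.floor_le ht0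
          have : (i:ℝ) ≤ t := by rw [hieq] at *; push_cast [Nat.cast_sub hk]; linarith
          nlinarith
        · calc y ≤ x := hyx
            _ = x / k * ((i:ℝ)+1) := by rw [hik]; field_simp
    rw [abs_le]
    have hdiv : x / (2*(k:ℝ)) = (x/k)/2 := by ring
    have hexp1 : x/(k:ℝ)*((i:ℝ)+1) = x/(k:ℝ)*((i:ℝ)+1/2) + (x/(k:ℝ))/2 := by ring
    have hexp2 : x/(k:ℝ)*(i:ℝ) = x/(k:ℝ)*((i:ℝ)+1/2) - (x/(k:ℝ))/2 := by ring
    constructor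
    · have := hsandwich.1
      linarith
    · have := hsandwich.2
      linarith

lemma subs_length (Q : Sq) (k : ℕ) : (subs Q k).length = k * k := by
  simp [subs]

lemma mem_subs_iff {Q : Sq} {k : ℕ} {Q' : Sq} (hk : 0 < k) :
    Q' ∈ subs Q k ↔ ∃ i j : ℕ, i < k ∧ j < k ∧ Q' = (subCtr Q k i j, Q.2 / k) := by
  constructor
  · intro h
    obtain ⟨t, htmem, rfl⟩ := List.mem_map.1 h
    have ht : t < k * k := List.mem_range.1 htmem
    exact ⟨t % k, t / k, Nat.mod_lt _ hk, Nat.div_lt_iff_lt_mul hk |>.2 (by omega), rfl⟩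
  · rintro ⟨i, j, hi, hj, rfl⟩
    apply List.mem_map.2
    refine ⟨i + j * k, List.mem_range.2 (by nlinarith), ?_⟩
    have h1 : (i + j * k) % k = i := by
      rw [Nat.add_mul_mod_self_right, Nat.mod_eq_of_lt hi]
    have h2 : (i + j * k) / k = j := by
      rw [Nat.add_mul_div_right _ _ hk, Nat.div_eq_of_lt hi, Nat.zero_add]
    rw [h1, h2]

lemma subCtr0 (Q : Sq) (k i j : ℕ) : subCtr Q k i j 0 = Q.1 0 - Q.2 / 2 + Q.2 / k * (i + 1/2) := rfl
lemma subCtr1 (Q : Sq) (k i j : ℕ) : subCtr Q k i j 1 = Q.1 1 - Q.2 / 2 + Q.2 / k * (j + 1/2) := rfl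

/-- 1-D fact: subinterval is inside the interval. -/
lemma oneD_sub {x u : ℝ} {k i : ℕ} (hik : i < k) (hx : 0 ≤ x)
    (h : |u - (x / k * (i + 1/2) - x/2)| ≤ x / k / 2) : |u| ≤ x / 2 := by
  have hk : (0:ℝ) < k := by exact_mod_cast Nat.pos_of_ne_zero (by omega)
  have hiR : (i:ℝ) + 1 ≤ k := by exact_mod_cast hik
  rw [abs_le] at h ⊢
  have hxk : 0 ≤ x / k := by positivity
  constructor
  · have h1 : x / k * (i + 1/2) ≥ x / k * (1/2) := by
      apply mul_le_mul_of_nonneg_left _ hxk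
      have : (0:ℝ) ≤ i := Nat.cast_nonneg i
      linarith
    have h2 : x / k * (1/2) = x / k / 2 := by ring
    linarith
  · have h1 : x / k * ((i:ℝ) + 1/2) ≤ x / k * ((k:ℝ) - 1/2) := by
      apply mul_le_mul_of_nonneg_left _ hxk
      linarith
    have h2 : x / k * ((k:ℝ) - 1/2) = x - x / k / 2 := by field_simp
    linarith

lemma box_subs_subset {Q : Sq} {k : ℕ} {Q' : Sq} (hk : 0 < k) (hx : 0 ≤ Q.2)
    (h : Q' ∈ subs Q k) : box Q' ⊆ box Q := by
  obtain ⟨i, j, hi, hj, rfl⟩ := (mem_subs_iff hk).1 h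
  intro q hq
  obtain ⟨hq0, hq1⟩ := hq
  dsimp only at hq0 hq1
  rw [subCtr0] at hq0
  rw [subCtr1] at hq1
  constructor
  · apply oneD_sub hi hx
    convert hq0 using 2 <;> ring
  · apply oneD_sub hj hx
    convert hq1 using 2 <;> ring

lemma cover {Q : Sq} {k : ℕ} (hk : 0 < k) (hx : 0 ≤ Q.2) {w : Pt} (hw : w ∈ box Q) :
    ∃ Q' ∈ subs Q k, w ∈ box Q' := by
  obtain ⟨hw0, hw1⟩ := hw
  have h0 := abs_le.1 hw0
  have h1 := abs_le.1 hw1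
  obtain ⟨i, hi, hresi⟩ := oneD (x := Q.2) (y := w 0 - Q.1 0 + Q.2/2) hk hx (by linarith) (by linarith)
  obtain ⟨j, hj, hresj⟩ := oneD (x := Q.2) (y := w 1 - Q.1 1 + Q.2/2) hk hx (by linarith) (by linarith)
  refine ⟨(subCtr Q k i j, Q.2 / k), (mem_subs_iff hk).2 ⟨i, j, hi, hj, rfl⟩, ?_, ?_⟩
  · dsimp only
    rw [subCtr0]
    have : w 0 - (Q.1 0 - Q.2 / 2 + Q.2 / k * (i + 1/2)) = w 0 - Q.1 0 + Q.2/2 - Q.2 / k * (i + 1/2) := by ring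
    rw [this]
    calc |w 0 - Q.1 0 + Q.2/2 - Q.2 / k * (i + 1/2)| ≤ Q.2 / (2*k) := hresi
      _ = (Q.2 / k) / 2 := by ring
  · dsimp only
    rw [subCtr1]
    have : w 1 - (Q.1 1 - Q.2 / 2 + Q.2 / k * (j + 1/2)) = w 1 - Q.1 1 + Q.2/2 - Q.2 / k * (j + 1/2) := by ring
    rw [this]
    calc |w 1 - Q.1 1 + Q.2/2 - Q.2 / k * (j + 1/2)| ≤ Q.2 / (2*k) := hresj
      _ = (Q.2 / k) / 2 := by ring


-- ===================== kOf and children =====================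

/-- `sin` is antitone on `[π/2, π]`. -/
lemma sin_anti {u v : ℝ} (hu : π/2 ≤ u) (huv : u ≤ v) (hv : v ≤ π) : Real.sin v ≤ Real.sin u := by
  rw [← Real.cos_sub_pi_div_two u, ← Real.cos_sub_pi_div_two v]
  apply Real.cos_le_cos_of_nonneg_of_le_pi (by linarith) (by linarith) (by linarith)

def sg (θ : ℝ) : ℝ := Real.sin (max θ π / 2)

lemma sg_pos {θ : ℝ} (hθ2 : θ < 2*π) : 0 < sg θ := by
  have hπ := Real.pi_pos
  apply Real.sin_pos_of_pos_of_lt_pi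
  · have : π ≤ max θ π := le_max_right _ _
    linarith
  · have : max θ π < 2*π := max_lt hθ2 (by linarith)
    linarith

lemma sg_le_one (θ : ℝ) : sg θ ≤ 1 := Real.sin_le_one _

lemma sg_anti {θ θ' : ℝ} (hθ : θ ≤ θ') (hθ2 : θ' < 2*π) : sg θ' ≤ sg θ := by
  have hπ := Real.pi_pos
  apply sin_anti
  · have : π ≤ max θ π := le_max_right _ _
    linarith
  · have : max θ π ≤ max θ' π := max_le_max hθ le_rfl
    linarith
  · have : max θ' π < 2*π := max_lt hθ2 (by linarith)
    linarith

lemma kOf_ge (θ : ℝ) : 7 ≤ kOf θ := le_max_left _ _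

lemma kOf_pos (θ : ℝ) : 0 < kOf θ := lt_of_lt_of_le (by norm_num) (kOf_ge θ)

lemma kOf_big {θ : ℝ} (hθ2 : θ < 2*π) : 4 * Real.sqrt 2 / sg θ < kOf θ := by
  have hs := sg_pos hθ2
  have hv : 0 < 4 * Real.sqrt 2 / sg θ := by positivity
  set v := 4 * Real.sqrt 2 / sg θ with hvdef
  have h1 : (1:ℤ) ≤ ⌈v⌉ := by exact_mod_cast Int.le_ceil_iff.2 (by norm_num; linarith)
  have h2 : ((⌈v⌉.toNat : ℤ) : ℝ) = (⌈v⌉ : ℝ) := by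
    rw [Int.toNat_of_nonneg (by omega)]
  have h3 : (kOf θ : ℝ) ≥ (⌈v⌉.toNat + 1 : ℕ) := by
    have : (⌈v⌉.toNat + 1 : ℕ) ≤ kOf θ := le_max_right _ _
    exact_mod_cast this
  have h4 : v ≤ (⌈v⌉ : ℝ) := Int.le_ceil v
  push_cast at h3
  rw [show ((⌈v⌉.toNat : ℕ) : ℝ) = ((⌈v⌉.toNat : ℤ) : ℝ) by push_cast; ring, h2] at h3
  linarith

lemma kOf_mono {θ θ' : ℝ} (hθ : θ ≤ θ') (hθ2 : θ' < 2*π) : kOf θ ≤ kOf θ' := by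
  have hs' := sg_pos hθ2
  have hs := sg_anti hθ hθ2
  unfold kOf
  apply max_le_max le_rfl
  have h1 : (4 * Real.sqrt 2 / sg θ) ≤ 4 * Real.sqrt 2 / sg θ' := by
    apply div_le_div_of_nonneg_left (by positivity) hs' hs
  have h2 : (4 * Real.sqrt 2 / Real.sin (max θ π / 2)) ≤ 4 * Real.sqrt 2 / Real.sin (max θ' π / 2) := h1
  have hceil := Int.ceil_le_ceil h2
  omega

lemma length_filter_lt {α : Type*} (p : α → Bool) :
    ∀ (l : List α) (a : α), a ∈ l → p a = false → (l.filter p).length < l.length := by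
  intro l
  induction l with
  | nil => intro a ha; simp at ha
  | cons b l ih =>
    intro a ha hpa
    rcases List.mem_cons.1 ha with rfl | ha'
    · rw [List.filter_cons, hpa]
      simp only [Bool.false_eq_true, if_false, List.length_cons]
      have := List.length_filter_le p l
      omega
    · rw [List.filter_cons]
      by_cases hb : p b
      · rw [if_pos hb]
        simp only [List.length_cons]
        have := ih a ha' hpa
        omega
      · rw [if_neg hb]
        simp only [List.length_cons]
        have := ih a ha' hpa
        omega

lemma ctr_mem_box {Q : Sq} (hx : 0 ≤ Q.2) : Q.1 ∈ box Q := by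
  constructor <;> simp <;> positivity

section childrenFacts

variable {Q : Sq} {h : Hint} (happx : h.apex = Q.1) (hθ0 : 0 < h.angle) (hθ2 : h.angle < 2*π)
  (hx : Real.sqrt 2 < Q.2)

include happx hθ0 hθ2 hx

lemma children_dead : ∃ Q' ∈ subs Q (kOf h.angle), Disjoint (box Q') h.set := by
  have hxpos : (0:ℝ) < Q.2 := lt_trans (by positivity) hx
  set θ := h.angle
  set k := kOf θ with hk
  have hkpos := kOf_pos θ
  have hkR : (0:ℝ) < k := by exact_mod_cast hkpos
  set θ'' := max θ π with hθ''
  have hθ''1 : π ≤ θ'' := le_max_right _ _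
  have hθ''2 : θ'' < 2*π := max_lt hθ2 (by have := Real.pi_pos; linarith)
  have hsval : sg θ = Real.sin (θ''/2) := rfl
  have hs : 0 < Real.sin (θ''/2) := by rw [← hsval]; exact sg_pos hθ2
  set ρ := Q.2/4 with hρdef
  have hρ : 0 ≤ ρ := by positivity
  set e := Q.1 + ρ • unitDir (h.start + π - θ''/2) with he
  have hebox : e ∈ box Q := by
    constructor
    · have : e 0 - Q.1 0 = ρ * Real.cos (h.start + π - θ''/2) := by
        rw [he]; simp only [pt_add, pt_smul, unitDir0]; ring
      rw [this, abs_mul, abs_of_nonneg hρ]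
      calc ρ * |Real.cos (h.start + π - θ''/2)| ≤ ρ * 1 :=
            mul_le_mul_of_nonneg_left (Real.abs_cos_le_one _) hρ
        _ ≤ Q.2 / 2 := by rw [hρdef]; linarith
    · have : e 1 - Q.1 1 = ρ * Real.sin (h.start + π - θ''/2) := by
        rw [he]; simp only [pt_add, pt_smul, unitDir1]; ring
      rw [this, abs_mul, abs_of_nonneg hρ]
      calc ρ * |Real.sin (h.start + π - θ''/2)| ≤ ρ * 1 :=
            mul_le_mul_of_nonneg_left (Real.abs_sin_le_one _) hρ
        _ ≤ Q.2 / 2 := by rw [hρdef]; linarith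
  obtain ⟨Q', hQ'mem, heQ'⟩ := cover hkpos (le_of_lt hxpos) hebox
  refine ⟨Q', hQ'mem, ?_⟩
  rw [Set.disjoint_left]
  intro q hqbox hqset
  -- q in the sector: far from e
  have hqsec : q ∈ sector Q.1 h.start θ'' := by
    apply sector_mono Q.1 h.start (le_max_left _ _)
    rw [Hint.set, happx] at hqset
    exact hqset
  have hfar : ρ * Real.sin (θ''/2) ≤ dist q e :=
    sector_clearance Q.1 h.start θ'' ρ hθ''1 hθ''2 hρ hqsec
  -- q close to e: both in box Q' of side Q.2/k
  obtain ⟨i, j, hi, hj, rfl⟩ := (mem_subs_iff hkpos).1 hQ'mem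
  have hclose : dist q e ≤ Real.sqrt 2 * (Q.2 / k) := by
    apply dist_le_of_coords
    · obtain ⟨hq0, _⟩ := hqbox
      obtain ⟨he0, _⟩ := heQ'
      dsimp only at hq0 he0
      calc |q 0 - e 0| = |(q 0 - subCtr Q k i j 0) - (e 0 - subCtr Q k i j 0)| := by ring_nf
        _ ≤ |q 0 - subCtr Q k i j 0| + |e 0 - subCtr Q k i j 0| := abs_sub _ _
        _ ≤ Q.2 / k / 2 + Q.2 / k / 2 := add_le_add hq0 he0
        _ = Q.2 / k := by ring
    · obtain ⟨_, hq1⟩ := hqbox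
      obtain ⟨_, he1⟩ := heQ'
      dsimp only at hq1 he1
      calc |q 1 - e 1| = |(q 1 - subCtr Q k i j 1) - (e 1 - subCtr Q k i j 1)| := by ring_nf
        _ ≤ |q 1 - subCtr Q k i j 1| + |e 1 - subCtr Q k i j 1| := abs_sub _ _
        _ ≤ Q.2 / k / 2 + Q.2 / k / 2 := add_le_add hq1 he1
        _ = Q.2 / k := by ring
  -- contradiction
  have hbig : 4 * Real.sqrt 2 < (k:ℝ) * Real.sin (θ''/2) := by
    have h1 := kOf_big hθ2
    have h2 : 4 * Real.sqrt 2 / Real.sin (θ''/2) < (k:ℝ) := hsval ▸ h1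
    rw [div_lt_iff₀ hs] at h2
    linarith
  have h6 : ρ * Real.sin (θ''/2) * k ≤ Real.sqrt 2 * (Q.2/k) * k :=
    mul_le_mul_of_nonneg_right (le_trans hfar hclose) (le_of_lt hkR)
  have h7 : Real.sqrt 2 * (Q.2/(k:ℝ)) * (k:ℝ) = Real.sqrt 2 * Q.2 := by field_simp
  have h8 : Real.sqrt 2 * Q.2 < ρ * ((k:ℝ) * Real.sin (θ''/2)) := by
    rw [hρdef]
    nlinarith [mul_lt_mul_of_pos_left hbig (show (0:ℝ) < Q.2/4 by positivity)]
  nlinarith [h6, h7, h8]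

lemma children_short :
    (children Q h).length + 1 ≤ (kOf h.angle) * (kOf h.angle) := by
  obtain ⟨Q', hQ'mem, hdisj⟩ := children_dead happx hθ0 hθ2 hx
  have : children Q h = (subs Q (kOf h.angle)).filter
      fun Q'' => decide (¬ Disjoint (box Q'') h.set) := by
    rw [children, if_neg (not_le.2 hx)]
  rw [this]
  have hlt := length_filter_lt (fun Q'' => decide (¬ Disjoint (box Q'') h.set))
    (subs Q (kOf h.angle)) Q' hQ'mem (by simp [hdisj])
  rw [subs_length] at hlt
  omega

end childrenFacts

lemma children_sub {Q : Sq} {h : Hint} {Q' : Sq} (hmem : Q' ∈ children Q h) :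
    Q' ∈ subs Q (kOf h.angle) := by
  rw [children] at hmem
  split at hmem
  · simp at hmem
  · exact List.mem_of_mem_filter hmem

lemma children_cover {Q : Sq} {h : Hint} {w : Pt} (hx : Real.sqrt 2 < Q.2)
    (hwbox : w ∈ box Q) (hwset : w ∈ h.set) :
    ∃ Q' ∈ children Q h, w ∈ box Q' := by
  have hxpos : (0:ℝ) < Q.2 := lt_trans (by positivity) hx
  obtain ⟨Q', hQ'mem, hwQ'⟩ := cover (kOf_pos h.angle) (le_of_lt hxpos) hwbox
  refine ⟨Q', ?_, hwQ'⟩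
  rw [children, if_neg (not_le.2 hx)]
  rw [List.mem_filter]
  refine ⟨hQ'mem, ?_⟩
  simp only [decide_eq_true_eq]
  exact Set.not_disjoint_iff.2 ⟨w, hwQ', hwset⟩


-- ===================== constants =====================

def Kc (β : ℝ) : ℕ := kOf β
def epsc (β : ℝ) : ℝ :=
  Real.log (((Kc β : ℝ)^2 - 1/2)/((Kc β : ℝ)^2 - 1)) / Real.log (Kc β)
def alphac (β : ℝ) : ℝ := 2 - epsc β
def Ac (β : ℝ) : ℝ := 2 * Real.sqrt 2 * ((Kc β : ℝ))^4 + 1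
def Fc (β : ℝ) (x : ℝ) : ℝ := Ac β * x ^ (alphac β)

section constantsFacts

variable {β : ℝ}

lemma K7 : (7 : ℕ) ≤ Kc β := kOf_ge β

lemma KR7 : (7 : ℝ) ≤ (Kc β : ℝ) := by exact_mod_cast K7

lemma Rgt1 : 1 < ((Kc β : ℝ)^2 - 1/2)/((Kc β : ℝ)^2 - 1) := by
  have h := KR7 (β := β)
  rw [lt_div_iff₀ (by nlinarith)]
  nlinarith

lemma RleK : ((Kc β : ℝ)^2 - 1/2)/((Kc β : ℝ)^2 - 1) ≤ (Kc β : ℝ) := by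
  have h := KR7 (β := β)
  rw [div_le_iff₀ (by nlinarith)]
  nlinarith

lemma logK_pos : 0 < Real.log (Kc β) := by
  apply Real.log_pos
  have := KR7 (β := β); linarith

lemma eps_pos : 0 < epsc β :=
  div_pos (Real.log_pos Rgt1) logK_pos

lemma eps_le_one : epsc β ≤ 1 := by
  rw [epsc, div_le_one logK_pos]
  apply Real.log_le_log (by linarith [Rgt1 (β := β)])
  exact RleK

lemma alpha_ge_one : 1 ≤ alphac β := by
  have := eps_le_one (β := β); rw [alphac]; linarith

lemma alpha_le_two : alphac β ≤ 2 := by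
  have := eps_pos (β := β); rw [alphac]; linarith

lemma K_rpow_eps : (Kc β : ℝ) ^ (epsc β) = ((Kc β : ℝ)^2 - 1/2)/((Kc β : ℝ)^2 - 1) := by
  have hK : (0:ℝ) < (Kc β : ℝ) := by linarith [KR7 (β := β)]
  rw [Real.rpow_def_of_pos hK, epsc, mul_comm, div_mul_cancel₀ _ (ne_of_gt logK_pos)]
  exact Real.exp_log (by linarith [Rgt1 (β := β)])

lemma Ac_pos : 0 < Ac β := by
  have : (0:ℝ) ≤ 2 * Real.sqrt 2 * ((Kc β : ℝ))^4 := by positivity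
  rw [Ac]; linarith

lemma Fc_nonneg {x : ℝ} (hx : 0 ≤ x) : 0 ≤ Fc β x := by
  rw [Fc]; exact mul_nonneg (le_of_lt Ac_pos) (Real.rpow_nonneg hx _)

lemma aux2 {u V : ℝ} (hu : 1 ≤ u) (huV : u ≤ V) (hV : 2 ≤ V) :
    (u - 1) * ((V - 1/2)/(V - 1)) ≤ (1 - 1/(2*V)) * u := by
  have hV1 : (0:ℝ) < V - 1 := by linarith
  have h2V : (0:ℝ) < 2*V := by linarith
  rw [show (1 - 1/(2*V)) * u = ((2*V - 1)*u)/(2*V) by field_simp; try ring]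
  rw [show (u - 1) * ((V - 1/2)/(V - 1)) = ((u - 1)*(V - 1/2))/(V - 1) by ring]
  rw [div_le_div_iff₀ hV1 h2V]
  nlinarith [mul_nonneg (show (0:ℝ) ≤ 2*V - 1 by linarith) (show (0:ℝ) ≤ V - u by linarith)]

/-- The key recursion inequality. -/
lemma key_ineq (hβ : β < 2*π) {θ : ℝ} (hθ0 : 0 < θ) (hθβ : θ ≤ β) {x : ℝ}
    (hx : Real.sqrt 2 < x) :
    ((kOf θ : ℝ) * (kOf θ : ℝ) - 1) * (Fc β (x / (kOf θ : ℝ)) + Real.sqrt 2 * x)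
      ≤ Fc β x := by
  set k := kOf θ with hkdef
  set K := Kc β with hKdef
  set α := alphac β with hα
  set ε := epsc β with hε
  set G := Ac β with hGdef
  have hkK : k ≤ K := kOf_mono hθβ hβ
  have hk7 : (7:ℝ) ≤ (k:ℝ) := by exact_mod_cast kOf_ge θ
  have hK7 : (7:ℝ) ≤ (K:ℝ) := KR7
  have hα1 : 1 ≤ α := alpha_ge_one
  have hα2 : α ≤ 2 := alpha_le_two
  have hε0 : 0 < ε := eps_pos
  have hαε : α = 2 - ε := rfl
  have hKeps : (K:ℝ) ^ ε = ((K:ℝ)^2 - 1/2)/((K:ℝ)^2 - 1) := K_rpow_eps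
  have hG : G = 2*Real.sqrt 2*(K:ℝ)^4 + 1 := rfl
  have hFc1 : Fc β (x / (k:ℝ)) = G * (x/(k:ℝ)) ^ α := rfl
  have hFc2 : Fc β x = G * x ^ α := rfl
  have hGpos : 0 < G := Ac_pos
  rw [hFc1, hFc2]
  clear_value k K α ε G
  have hkKR : (k:ℝ) ≤ (K:ℝ) := by exact_mod_cast hkK
  have hkpos : (0:ℝ) < k := by linarith
  have hx1 : (1:ℝ) < x := by nlinarith [Real.sq_sqrt (by norm_num : (0:ℝ) ≤ 2), Real.sqrt_nonneg 2, hx]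
  have hxpos : (0:ℝ) < x := by linarith
  have hkk1 : (1:ℝ) ≤ (k:ℝ)*(k:ℝ) := by nlinarith
  have huV : (k:ℝ)*(k:ℝ) ≤ (K:ℝ)^2 := by nlinarith
  have hV2 : (2:ℝ) ≤ (K:ℝ)^2 := by nlinarith
  -- step A : (x/k)^α = x^α / k^α
  have hdiv : (x / (k:ℝ)) ^ α = x ^ α / (k:ℝ) ^ α :=
    Real.div_rpow (le_of_lt hxpos) (le_of_lt hkpos) α
  -- k^α = k^2 / k^ε
  have hka : (k:ℝ) ^ α = (k:ℝ)^2 / (k:ℝ) ^ ε := by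
    rw [hαε, Real.rpow_sub hkpos]
    norm_num [Real.rpow_two]
  -- k^ε ≤ K^ε = R
  have hkeK : (k:ℝ) ^ ε ≤ ((K:ℝ)^2 - 1/2)/((K:ℝ)^2 - 1) := by
    rw [← hKeps]
    exact Real.rpow_le_rpow (le_of_lt hkpos) hkKR (le_of_lt hε0)
  have hke_pos : (0:ℝ) < (k:ℝ) ^ ε := Real.rpow_pos_of_pos hkpos ε
  -- claim1 : (k²-1)/k^α ≤ 1 - 1/(2K²)
  have claim1 : ((k:ℝ)*(k:ℝ) - 1) / (k:ℝ)^α ≤ 1 - 1/(2*(K:ℝ)^2) := by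
    rw [hka]
    rw [div_div_eq_mul_div, div_le_iff₀ (by positivity)]
    -- (k²-1) * k^ε ≤ (1 - 1/(2K²)) * k²
    have h1 : ((k:ℝ)*(k:ℝ) - 1) * (k:ℝ)^ε ≤ ((k:ℝ)*(k:ℝ) - 1) * (((K:ℝ)^2 - 1/2)/((K:ℝ)^2 - 1)) :=
      mul_le_mul_of_nonneg_left hkeK (by linarith)
    have h2 : ((k:ℝ)*(k:ℝ) - 1) * (((K:ℝ)^2 - 1/2)/((K:ℝ)^2 - 1)) ≤ (1 - 1/(2*(K:ℝ)^2)) * ((k:ℝ)*(k:ℝ)) :=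
      aux2 hkk1 huV hV2
    calc ((k:ℝ)*(k:ℝ) - 1) * (k:ℝ)^ε ≤ _ := h1
      _ ≤ (1 - 1/(2*(K:ℝ)^2)) * ((k:ℝ)*(k:ℝ)) := h2
      _ = (1 - 1/(2*(K:ℝ)^2)) * (k:ℝ)^2 := by ring
  -- final assembly
  set X := x ^ α with hX
  have hXx : x ≤ X := by
    rw [hX]
    calc x = x ^ (1:ℝ) := (Real.rpow_one x).symm
      _ ≤ x ^ α := Real.rpow_le_rpow_of_exponent_le (le_of_lt hx1) hα1
  have hXpos : 0 < X := by rw [hX]; positivity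
  rw [hdiv]
  have expand : ((k:ℝ)*(k:ℝ) - 1)*(G*(X/(k:ℝ)^α) + Real.sqrt 2*x)
      = G*X*(((k:ℝ)*(k:ℝ) - 1)/(k:ℝ)^α) + ((k:ℝ)*(k:ℝ) - 1)*(Real.sqrt 2*x) := by
    ring
  rw [expand]
  have e1 : G*X*(((k:ℝ)*(k:ℝ) - 1)/(k:ℝ)^α) ≤ G*X*(1 - 1/(2*(K:ℝ)^2)) :=
    mul_le_mul_of_nonneg_left claim1 (by positivity)
  have e2 : ((k:ℝ)*(k:ℝ) - 1)*(Real.sqrt 2*x) ≤ (K:ℝ)^2 * (Real.sqrt 2*x) := by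
    apply mul_le_mul_of_nonneg_right _ (by positivity)
    linarith
  have e4 : 2*Real.sqrt 2*(K:ℝ)^4 * x ≤ G * X := by
    calc 2*Real.sqrt 2*(K:ℝ)^4 * x ≤ 2*Real.sqrt 2*(K:ℝ)^4 * X :=
          mul_le_mul_of_nonneg_left hXx (by positivity)
      _ ≤ 2*Real.sqrt 2*(K:ℝ)^4 * X + X := le_add_of_nonneg_right (le_of_lt hXpos)
      _ = (2*Real.sqrt 2*(K:ℝ)^4 + 1) * X := by ring
      _ = G * X := by rw [hG]
  have e3 : (K:ℝ)^2*(Real.sqrt 2*x) ≤ G*X*(1/(2*(K:ℝ)^2)) := by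
    have heq : (K:ℝ)^2*(Real.sqrt 2*x) = (2*Real.sqrt 2*(K:ℝ)^4 * x) * (1/(2*(K:ℝ)^2)) := by
      field_simp
    rw [heq]
    exact mul_le_mul_of_nonneg_right e4 (by positivity)
  have hfin : G*X*(1 - 1/(2*(K:ℝ)^2)) + G*X*(1/(2*(K:ℝ)^2)) = G*X := by ring
  linarith

end constantsFacts

-- ===================== the run =====================

def Sst (adv : List Hint → Hint) (n : ℕ) : St := (hist adv n).foldl step st0

lemma Sst_zero (adv : List Hint → Hint) : Sst adv 0 = st0 := rfl

lemma Sst_succ (adv : List Hint → Hint) (n : ℕ) :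
    Sst adv (n+1) = step (Sst adv n) (hint adv n) := by
  show (hist adv (n+1)).foldl step st0 = _
  rw [show hist adv (n+1) = hist adv n ++ [adv (hist adv n)] from rfl, List.foldl_append]
  rfl

lemma pos_eq (adv : List Hint → Hint) (n : ℕ) :
    pos myStrat adv n = target (Sst adv n) := by
  cases n with
  | zero => rfl
  | succ n => rfl

lemma dist_box {Q : Sq} {p q : Pt} (hp : p ∈ box Q) (hq : q ∈ box Q) :
    dist p q ≤ Real.sqrt 2 * Q.2 := by
  obtain ⟨hp0, hp1⟩ := hp
  obtain ⟨hq0, hq1⟩ := hq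
  apply dist_le_of_coords
  · calc |p 0 - q 0| = |(p 0 - Q.1 0) - (q 0 - Q.1 0)| := by ring_nf
      _ ≤ |p 0 - Q.1 0| + |q 0 - Q.1 0| := abs_sub _ _
      _ ≤ Q.2 := by linarith
  · calc |p 1 - q 1| = |(p 1 - Q.1 1) - (q 1 - Q.1 1)| := by ring_nf
      _ ≤ |p 1 - Q.1 1| + |q 1 - Q.1 1| := abs_sub _ _
      _ ≤ Q.2 := by linarith

lemma found_base {Q : Sq} {w : Pt} (hx : Q.2 ≤ Real.sqrt 2) (h0 : 0 ≤ Q.2) (hz : w ∈ box Q) :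
    dist Q.1 w ≤ 1 := by
  obtain ⟨hz0, hz1⟩ := hz
  have h2 : dist Q.1 w ≤ Real.sqrt 2 * (Q.2/2) := by
    apply dist_le_of_coords
    · rw [abs_sub_comm]; exact hz0
    · rw [abs_sub_comm]; exact hz1
  have hs2 : Real.sqrt 2 * Real.sqrt 2 = 2 := Real.mul_self_sqrt (by norm_num)
  have : Real.sqrt 2 * (Q.2/2) ≤ Real.sqrt 2 * (Real.sqrt 2 / 2) := by
    apply mul_le_mul_of_nonneg_left _ (Real.sqrt_nonneg 2)
    linarith
  nlinarith

section processing

variable {β : ℝ} {adv : List Hint → Hint} {z : Pt}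

/-- The main processing lemma: once the stack head is `Q`, the agent processes `Q`
completely, stays in `box Q`, travels at most `Fc β Q.2` (excluding the final move),
and finds the treasure if it is in `box Q`. -/
lemma process (hβ : β < 2*π) (V : ValidAdv myStrat adv z {θ : ℝ | 0 < θ ∧ θ ≤ β}) :
    ∀ N : ℕ, ∀ (Q : Sq) (rest : List Sq) (j n : ℕ),
    Q.2 ≤ (N:ℝ) → 0 < Q.2 → Sst adv n = (j, Q :: rest) →
    ∃ m : ℕ, n ≤ m ∧ Sst adv (m+1) = (j, rest) ∧
      (∀ i, n ≤ i → i ≤ m → pos myStrat adv i ∈ box Q) ∧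
      (∑ i ∈ Finset.Ico n m, dist (pos myStrat adv i) (pos myStrat adv (i+1))) ≤ Fc β Q.2 ∧
      (z ∈ box Q → ∃ i, n ≤ i ∧ i ≤ m ∧ dist (pos myStrat adv i) z ≤ 1) := by
  intro N
  induction N with
  | zero =>
    intro Q rest j n hQN hQpos hS
    exfalso
    have : (0:ℝ) < 0 := by exact_mod_cast lt_of_lt_of_le hQpos hQN
    exact lt_irrefl _ this
  | succ N IH =>
    intro Q rest j n hQN hQpos hS
    obtain ⟨happx, ⟨hθ0, hθβ⟩, hzset⟩ := V n
    have hpos : pos myStrat adv n = Q.1 := by rw [pos_eq, hS]; rfl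
    have happx' : (hint adv n).apex = Q.1 := by rw [happx, hpos]
    by_cases hsmall : Q.2 ≤ Real.sqrt 2
    · -- base case
      refine ⟨n, le_rfl, ?_, ?_, ?_, ?_⟩
      · rw [Sst_succ, hS]
        show (j, children Q (hint adv n) ++ rest) = (j, rest)
        rw [children, if_pos hsmall]
        rfl
      · intro i hni hin
        have : i = n := le_antisymm hin hni
        subst this
        rw [hpos]
        exact ctr_mem_box (le_of_lt hQpos)
      · rw [Finset.Ico_self, Finset.sum_empty]
        exact Fc_nonneg (le_of_lt hQpos)
      · intro hzbox
        exact ⟨n, le_rfl, le_rfl, by rw [hpos]; exact found_base hsmall (le_of_lt hQpos) hzbox⟩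
    · -- recursive case
      push_neg at hsmall
      have hθ2 : (hint adv n).angle < 2*π := lt_of_le_of_lt hθβ hβ
      set L := children Q (hint adv n) with hL
      have hSn1 : Sst adv (n+1) = (j, L ++ rest) := by
        rw [Sst_succ, hS]; rfl
      set k := kOf (hint adv n).angle with hk
      have hkpos : 0 < k := kOf_pos _
      have hkR : (0:ℝ) < (k:ℝ) := by exact_mod_cast hkpos
      have hk7 : (7:ℝ) ≤ (k:ℝ) := by exact_mod_cast kOf_ge _
      have hx1 : (1:ℝ) < Q.2 := by
        nlinarith [Real.sq_sqrt (by norm_num : (0:ℝ) ≤ 2), Real.sqrt_nonneg 2, hsmall]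
      have hN1 : (1:ℝ) ≤ (N:ℝ) := by
        have h1 : (1:ℝ) < (N:ℝ) + 1 := by push_cast at hQN; linarith
        have h2 : (0:ℝ) < (N:ℝ) := by linarith
        have h3 : 0 < N := by exact_mod_cast h2
        exact_mod_cast h3
      have hchildN : Q.2 / (k:ℝ) ≤ (N:ℝ) := by
        have h1 : Q.2 / (k:ℝ) ≤ Q.2 / 7 :=
          div_le_div_of_nonneg_left (le_of_lt hQpos) (by norm_num) hk7
        have h2 : Q.2 / 7 ≤ ((N:ℝ) + 1) / 7 := by
          apply div_le_div_of_nonneg_right ?_ (by norm_num)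
          push_cast at hQN ⊢; linarith
        have h3 : ((N:ℝ) + 1) / 7 ≤ (N:ℝ) := by linarith
        linarith
      have hchildpos : 0 < Q.2 / (k:ℝ) := by positivity
      set M := Real.sqrt 2 * Q.2 with hM
      have hMpos : 0 < M := by rw [hM]; positivity
      set Fy := Fc β (Q.2 / (k:ℝ)) with hFy
      have hFy0 : 0 ≤ Fy := Fc_nonneg (le_of_lt hchildpos)
      -- inner list processing
      have inner : ∀ (L' : List Sq), L' ≠ [] → (∀ Q' ∈ L', Q' ∈ subs Q k) →
          ∀ n', Sst adv n' = (j, L' ++ rest) →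
          ∃ m, n' ≤ m ∧ Sst adv (m+1) = (j, rest) ∧
            (∀ i, n' ≤ i → i ≤ m → pos myStrat adv i ∈ box Q) ∧
            (∑ i ∈ Finset.Ico n' m, dist (pos myStrat adv i) (pos myStrat adv (i+1)))
              ≤ (L'.length : ℝ) * (Fy + M) - M ∧
            ((∃ Q' ∈ L', z ∈ box Q') → ∃ i, n' ≤ i ∧ i ≤ m ∧ dist (pos myStrat adv i) z ≤ 1) := by
        intro L'
        induction L' with
        | nil => intro hne; exact absurd rfl hne
        | cons Q0 L0 ihL =>
          intro _ hmem n' hSn'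
          have hQ0mem : Q0 ∈ subs Q k := hmem Q0 List.mem_cons_self
          have hQ0side : Q0.2 = Q.2 / (k:ℝ) := by
            obtain ⟨i, j', hi, hj', rfl⟩ := (mem_subs_iff hkpos).1 hQ0mem
            rfl
          have hbox0 : box Q0 ⊆ box Q := box_subs_subset hkpos (le_of_lt hQpos) hQ0mem
          have hS0 : Sst adv n' = (j, Q0 :: (L0 ++ rest)) := by rw [hSn']; rfl
          obtain ⟨m0, hm0n, hSm01, hposin0, hsum0, hfound0⟩ :=
            IH Q0 (L0 ++ rest) j n' (by rw [hQ0side]; exact hchildN)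
              (by rw [hQ0side]; exact hchildpos) hS0
          rw [hQ0side, ← hFy] at hsum0
          by_cases hL0 : L0 = []
          · subst hL0
            refine ⟨m0, hm0n, by simpa using hSm01, ?_, ?_, ?_⟩
            · intro i h1 h2; exact hbox0 (hposin0 i h1 h2)
            · simp only [List.length_cons, List.length_nil]
              push_cast
              linarith
            · rintro ⟨Q', hQ'mem, hzQ'⟩
              simp only [List.mem_singleton] at hQ'mem
              subst hQ'mem
              exact hfound0 hzQ'
          · obtain ⟨m1, hm1n, hSm11, hposin1, hsum1, hfound1⟩ :=
              ihL hL0 (fun Q' hQ' => hmem Q' (List.mem_cons_of_mem _ hQ')) (m0+1) hSm01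
            refine ⟨m1, le_trans hm0n (le_trans (Nat.le_succ _) hm1n), hSm11, ?_, ?_, ?_⟩
            · intro i h1 h2
              rcases le_or_gt i m0 with hc | hc
              · exact hbox0 (hposin0 i h1 hc)
              · exact hposin1 i hc h2
            · -- sum splitting
              have hsplit1 : (∑ i ∈ Finset.Ico n' (m0+1), dist (pos myStrat adv i) (pos myStrat adv (i+1)))
                  + (∑ i ∈ Finset.Ico (m0+1) m1, dist (pos myStrat adv i) (pos myStrat adv (i+1)))
                  = ∑ i ∈ Finset.Ico n' m1, dist (pos myStrat adv i) (pos myStrat adv (i+1)) :=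
                Finset.sum_Ico_consecutive _ (le_trans hm0n (Nat.le_succ _)) hm1n
              have hsplit2 : (∑ i ∈ Finset.Ico n' m0, dist (pos myStrat adv i) (pos myStrat adv (i+1)))
                  + (∑ i ∈ Finset.Ico m0 (m0+1), dist (pos myStrat adv i) (pos myStrat adv (i+1)))
                  = ∑ i ∈ Finset.Ico n' (m0+1), dist (pos myStrat adv i) (pos myStrat adv (i+1)) :=
                Finset.sum_Ico_consecutive _ hm0n (Nat.le_succ _)
              have hmid : (∑ i ∈ Finset.Ico m0 (m0+1), dist (pos myStrat adv i) (pos myStrat adv (i+1)))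
                  = dist (pos myStrat adv m0) (pos myStrat adv (m0+1)) := by
                rw [Nat.Ico_succ_singleton, Finset.sum_singleton]
              have hdm0 : dist (pos myStrat adv m0) (pos myStrat adv (m0+1)) ≤ M := by
                rw [hM]
                apply dist_box (hbox0 (hposin0 m0 hm0n le_rfl))
                exact hposin1 (m0+1) le_rfl hm1n
              have hlen : ((Q0 :: L0).length : ℝ) = (L0.length : ℝ) + 1 := by
                simp
              rw [← hsplit1, ← hsplit2, hmid, hlen]
              have : (L0.length:ℝ) * (Fy + M) - M
                  = ((L0.length:ℝ) + 1) * (Fy + M) - M - (Fy + M) := by ring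
              linarith
            · rintro ⟨Q', hQ'mem, hzQ'⟩
              rcases List.mem_cons.1 hQ'mem with rfl | hQ'mem'
              · obtain ⟨i, h1, h2, h3⟩ := hfound0 hzQ'
                exact ⟨i, h1, le_trans h2 (le_trans (Nat.le_succ _) hm1n), h3⟩
              · obtain ⟨i, h1, h2, h3⟩ := hfound1 ⟨Q', hQ'mem', hzQ'⟩
                exact ⟨i, le_trans hm0n (le_trans (Nat.le_succ _) h1), h2, h3⟩
      -- outer assembly
      by_cases hLnil : L = []
      · refine ⟨n, le_rfl, by rw [hSn1, hLnil]; rfl, ?_, ?_, ?_⟩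
        · intro i h1 h2
          have : i = n := le_antisymm h2 h1
          subst this
          rw [hpos]
          exact ctr_mem_box (le_of_lt hQpos)
        · rw [Finset.Ico_self, Finset.sum_empty]
          exact Fc_nonneg (le_of_lt hQpos)
        · intro hzbox
          exfalso
          obtain ⟨Q', hQ'mem, _⟩ := children_cover hsmall hzbox hzset
          rw [← hL, hLnil] at hQ'mem
          simp at hQ'mem
      · obtain ⟨m, hmn, hSm1, hposin, hsum, hfound⟩ :=
          inner L hLnil (fun Q' hQ' => children_sub hQ') (n+1) hSn1
        refine ⟨m, le_trans (Nat.le_succ _) hmn, hSm1, ?_, ?_, ?_⟩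
        · intro i h1 h2
          rcases Nat.lt_or_ge i (n+1) with hc | hc
          · have : i = n := by omega
            subst this
            rw [hpos]
            exact ctr_mem_box (le_of_lt hQpos)
          · exact hposin i hc h2
        · -- cost bound
          have hsplit : (∑ i ∈ Finset.Ico n (n+1), dist (pos myStrat adv i) (pos myStrat adv (i+1)))
              + (∑ i ∈ Finset.Ico (n+1) m, dist (pos myStrat adv i) (pos myStrat adv (i+1)))
              = ∑ i ∈ Finset.Ico n m, dist (pos myStrat adv i) (pos myStrat adv (i+1)) :=
            Finset.sum_Ico_consecutive _ (Nat.le_succ _) hmn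
          have hmid : (∑ i ∈ Finset.Ico n (n+1), dist (pos myStrat adv i) (pos myStrat adv (i+1)))
              = dist (pos myStrat adv n) (pos myStrat adv (n+1)) := by
            rw [Nat.Ico_succ_singleton, Finset.sum_singleton]
          have hdn : dist (pos myStrat adv n) (pos myStrat adv (n+1)) ≤ M := by
            rw [hM]
            apply dist_box
            · rw [hpos]; exact ctr_mem_box (le_of_lt hQpos)
            · exact hposin (n+1) le_rfl hmn
          have hlenb : (L.length : ℝ) ≤ (k:ℝ)*(k:ℝ) - 1 := by
            have := children_short happx' hθ0 hθ2 hsmall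
            rw [← hk, ← hL] at this
            have : (L.length : ℝ) + 1 ≤ (k:ℝ)*(k:ℝ) := by exact_mod_cast this
            linarith
          have hki := key_ineq hβ hθ0 hθβ hsmall
          rw [← hk, ← hFy, ← hM] at hki
          have htot : (L.length : ℝ) * (Fy + M) ≤ ((k:ℝ)*(k:ℝ) - 1) * (Fy + M) :=
            mul_le_mul_of_nonneg_right hlenb (by positivity)
          rw [← hsplit, hmid]
          calc dist (pos myStrat adv n) (pos myStrat adv (n+1))
              + (∑ i ∈ Finset.Ico (n+1) m, dist (pos myStrat adv i) (pos myStrat adv (i+1)))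
              ≤ M + ((L.length : ℝ) * (Fy + M) - M) := add_le_add hdn hsum
            _ = (L.length : ℝ) * (Fy + M) := by ring
            _ ≤ ((k:ℝ)*(k:ℝ) - 1) * (Fy + M) := htot
            _ ≤ Fc β Q.2 := hki
        · intro hzbox
          obtain ⟨Q', hQ'mem, hzQ'⟩ := children_cover hsmall hzbox hzset
          obtain ⟨i, h1, h2, h3⟩ := hfound ⟨Q', hQ'mem, hzQ'⟩
          exact ⟨i, le_trans (Nat.le_succ _) h1, h2, h3⟩

/-- Phase induction: reaching the start of phase `j`. -/
lemma phase (hβ : β < 2*π) (V : ValidAdv myStrat adv z {θ : ℝ | 0 < θ ∧ θ ≤ β}) :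
    ∀ j : ℕ, ∃ nj : ℕ, Sst adv nj = (j, [bigSq j]) ∧
      (∑ i ∈ Finset.range nj, dist (pos myStrat adv i) (pos myStrat adv (i+1)))
        ≤ ∑ j' ∈ Finset.range j, (Fc β ((2:ℝ)^(j'+2)) + Real.sqrt 2 * (2:ℝ)^(j'+2)) := by
  intro j
  induction j with
  | zero => exact ⟨0, rfl, by simp⟩
  | succ j ihj =>
    obtain ⟨nj, hSnj, hsumnj⟩ := ihj
    have hside : (bigSq j).2 = (2:ℝ)^(j+2) := rfl
    have hQpos : (0:ℝ) < (bigSq j).2 := by rw [hside]; positivity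
    have hQN : (bigSq j).2 ≤ ((2^(j+2) : ℕ) : ℝ) := by rw [hside]; push_cast; exact le_refl _
    obtain ⟨m, hmn, hSm1, hposin, hsum, _⟩ :=
      process hβ V (2^(j+2)) (bigSq j) [] j nj hQN hQpos hSnj
    have hSm2 : Sst adv (m+2) = (j+1, [bigSq (j+1)]) := by
      rw [show m+2 = (m+1)+1 from rfl, Sst_succ, hSm1]
      rfl
    refine ⟨m+2, hSm2, ?_⟩
    have hPm1 : pos myStrat adv (m+1) = (bigSq j).1 := by rw [pos_eq, hSm1]; rfl
    have hPm2 : pos myStrat adv (m+2) = (0 : Pt) := by rw [pos_eq, hSm2]; rfl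
    have hdm : dist (pos myStrat adv m) (pos myStrat adv (m+1)) ≤ Real.sqrt 2 * (bigSq j).2 := by
      apply dist_box (hposin m hmn le_rfl)
      rw [hPm1]
      exact ctr_mem_box (le_of_lt hQpos)
    have hdm1 : dist (pos myStrat adv (m+1)) (pos myStrat adv (m+2)) = 0 := by
      rw [hPm1, hPm2]
      show dist (0:Pt) (0:Pt) = 0
      simp
    have hs1 : (∑ i ∈ Finset.Ico 0 nj, dist (pos myStrat adv i) (pos myStrat adv (i+1)))
        + (∑ i ∈ Finset.Ico nj (m+2), dist (pos myStrat adv i) (pos myStrat adv (i+1)))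
        = ∑ i ∈ Finset.Ico 0 (m+2), dist (pos myStrat adv i) (pos myStrat adv (i+1)) :=
      Finset.sum_Ico_consecutive _ (Nat.zero_le _) (by omega)
    have hs2 : (∑ i ∈ Finset.Ico nj m, dist (pos myStrat adv i) (pos myStrat adv (i+1)))
        + (∑ i ∈ Finset.Ico m (m+2), dist (pos myStrat adv i) (pos myStrat adv (i+1)))
        = ∑ i ∈ Finset.Ico nj (m+2), dist (pos myStrat adv i) (pos myStrat adv (i+1)) :=
      Finset.sum_Ico_consecutive _ hmn (by omega)
    have hs3 : (∑ i ∈ Finset.Ico m (m+2), dist (pos myStrat adv i) (pos myStrat adv (i+1)))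
        = dist (pos myStrat adv m) (pos myStrat adv (m+1))
          + dist (pos myStrat adv (m+1)) (pos myStrat adv (m+2)) := by
      rw [show m+2 = (m+1)+1 from rfl, Finset.sum_Ico_succ_top (by omega),
        Nat.Ico_succ_singleton, Finset.sum_singleton]
    simp only [← Finset.range_eq_Ico] at hs1
    rw [← hs1, ← hs2, hs3, Finset.sum_range_succ]
    rw [hside] at hsum hdm
    linarith

/-- Bounding the total sum of the phase costs. -/
lemma total_bound (hβ : β < 2*π) {D : ℝ} (hD : 1 < D) (J : ℕ) (hJ2 : (2:ℝ)^J ≤ 2*D) :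
    (∑ j' ∈ Finset.range (J+1), (Fc β ((2:ℝ)^(j'+2)) + Real.sqrt 2 * (2:ℝ)^(j'+2)))
      ≤ (128*(Ac β + Real.sqrt 2)) * D ^ ((2:ℝ) - epsc β) := by
  set α := alphac β with hα
  have hα1 : 1 ≤ α := alpha_ge_one
  have hα2 : α ≤ 2 := alpha_le_two
  have hA : 0 < Ac β := Ac_pos
  have hpow_rpow : ∀ n : ℕ, ((2:ℝ)^n) ^ α = ((2:ℝ)^α)^n := by
    intro n
    rw [← Real.rpow_natCast 2 n, ← Real.rpow_mul (by norm_num), mul_comm,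
      Real.rpow_mul (by norm_num), Real.rpow_natCast]
  set r := (2:ℝ)^α with hr
  have hr2 : (2:ℝ) ≤ r := by
    rw [hr]
    calc (2:ℝ) = (2:ℝ)^(1:ℝ) := (Real.rpow_one 2).symm
      _ ≤ (2:ℝ)^α := Real.rpow_le_rpow_of_exponent_le (by norm_num) hα1
  have hterm : ∀ j' : ℕ, Fc β ((2:ℝ)^(j'+2)) + Real.sqrt 2 * (2:ℝ)^(j'+2)
      ≤ (Ac β + Real.sqrt 2) * r^(j'+2) := by
    intro j'
    have hx1 : (1:ℝ) ≤ (2:ℝ)^(j'+2) := one_le_pow₀ (by norm_num)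
    have hxle : (2:ℝ)^(j'+2) ≤ ((2:ℝ)^(j'+2))^α := by
      calc (2:ℝ)^(j'+2) = ((2:ℝ)^(j'+2))^(1:ℝ) := (Real.rpow_one _).symm
        _ ≤ ((2:ℝ)^(j'+2))^α := Real.rpow_le_rpow_of_exponent_le hx1 hα1
    rw [Fc, ← hα, hpow_rpow]
    have h1 : Real.sqrt 2 * (2:ℝ)^(j'+2) ≤ Real.sqrt 2 * r^(j'+2) := by
      apply mul_le_mul_of_nonneg_left _ (Real.sqrt_nonneg 2)
      rw [← hpow_rpow]
      exact hxle
    nlinarith [pow_nonneg (by linarith : (0:ℝ) ≤ r) (j'+2), Real.sqrt_nonneg 2]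
  have hsum1 : (∑ j' ∈ Finset.range (J+1), (Fc β ((2:ℝ)^(j'+2)) + Real.sqrt 2 * (2:ℝ)^(j'+2)))
      ≤ ∑ j' ∈ Finset.range (J+1), (Ac β + Real.sqrt 2) * r^(j'+2) :=
    Finset.sum_le_sum (fun j' _ => hterm j')
  have hgeom : (∑ j' ∈ Finset.range (J+1), r^(j'+2)) ≤ 2 * r^(J+2) := by
    have hrne : r ≠ 1 := by linarith
    have hcalc : (∑ j' ∈ Finset.range (J+1), r^j') = (r^(J+1) - 1)/(r - 1) := geom_sum_eq hrne _
    have h1 : (∑ j' ∈ Finset.range (J+1), r^(j'+2)) = (∑ j' ∈ Finset.range (J+1), r^j') * r^2 := by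
      rw [Finset.sum_mul]
      apply Finset.sum_congr rfl
      intro i _
      rw [pow_add]
    rw [h1, hcalc]
    have hr1 : (0:ℝ) < r - 1 := by linarith
    have hkey : (r^(J+1) - 1)/(r - 1) ≤ 2 * r^J := by
      rw [div_le_iff₀ hr1]
      have hpw : (0:ℝ) ≤ r^J := by positivity
      have : r^(J+1) = r^J * r := pow_succ r J
      nlinarith [pow_le_pow_left₀ (by norm_num : (0:ℝ) ≤ 2) hr2 J]
    have hr2sq : (0:ℝ) ≤ r^2 := by positivity
    calc (r^(J+1) - 1)/(r - 1) * r^2 ≤ 2 * r^J * r^2 :=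
          mul_le_mul_of_nonneg_right hkey hr2sq
      _ = 2 * r^(J+2) := by ring
  have hfinalpow : r^(J+2) ≤ 64 * D ^ α := by
    have h1 : r^(J+2) = ((2:ℝ)^(J+2))^α := (hpow_rpow (J+2)).symm
    have h2 : (2:ℝ)^(J+2) ≤ 8*D := by
      have : (2:ℝ)^(J+2) = 4 * (2:ℝ)^J := by ring
      rw [this]
      linarith
    have h3 : ((2:ℝ)^(J+2))^α ≤ (8*D)^α := by
      apply Real.rpow_le_rpow (by positivity) h2 (by linarith)
    have h4 : (8*D)^α = (8:ℝ)^α * D^α := Real.mul_rpow (by norm_num) (by linarith)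
    have h5 : (8:ℝ)^α ≤ 64 := by
      calc (8:ℝ)^α ≤ (8:ℝ)^(2:ℝ) := Real.rpow_le_rpow_of_exponent_le (by norm_num) hα2
        _ = 64 := by
          rw [show (2:ℝ) = ((2:ℕ):ℝ) by norm_num, Real.rpow_natCast]
          norm_num
    have hD0 : (0:ℝ) ≤ D^α := Real.rpow_nonneg (by linarith) α
    calc r^(J+2) = ((2:ℝ)^(J+2))^α := h1
      _ ≤ (8:ℝ)^α * D^α := by rw [← h4]; exact h3
      _ ≤ 64 * D^α := mul_le_mul_of_nonneg_right h5 hD0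
  have hDα : D ^ ((2:ℝ) - epsc β) = D ^ α := rfl
  rw [hDα]
  have hAs : 0 < Ac β + Real.sqrt 2 := by positivity
  calc (∑ j' ∈ Finset.range (J+1), (Fc β ((2:ℝ)^(j'+2)) + Real.sqrt 2 * (2:ℝ)^(j'+2)))
      ≤ ∑ j' ∈ Finset.range (J+1), (Ac β + Real.sqrt 2) * r^(j'+2) := hsum1
    _ = (Ac β + Real.sqrt 2) * (∑ j' ∈ Finset.range (J+1), r^(j'+2)) := by
        rw [Finset.mul_sum]
    _ ≤ (Ac β + Real.sqrt 2) * (2 * r^(J+2)) :=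
        mul_le_mul_of_nonneg_left hgeom (le_of_lt hAs)
    _ ≤ (Ac β + Real.sqrt 2) * (2 * (64 * D ^ α)) := by
        apply mul_le_mul_of_nonneg_left _ (le_of_lt hAs)
        linarith
    _ = (128*(Ac β + Real.sqrt 2)) * D ^ α := by ring

end processing

end TH

/-- If all hints are angles at most a constant `β < 2π` (unknown to the agent, hence the
strategy is chosen before `β`), a deterministic agent can find the treasure at cost
`O(D^(2-ε))` for some `ε > 0`. -/
theorem treasure_hunt_angles_le_beta :
    ∃ strat : List Hint → Pt, ∀ β : ℝ, β < 2 * π →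
      ∃ ε c : ℝ, 0 < ε ∧ 0 < c ∧
        ∀ D : ℝ, 1 < D → ∀ z : Pt, ‖z‖ ≤ D → ∀ adv : List Hint → Hint,
          ValidAdv strat adv z {θ : ℝ | 0 < θ ∧ θ ≤ β} →
          Finds strat adv z (c * D ^ ((2 : ℝ) - ε)) := by
  refine ⟨TH.myStrat, ?_⟩
  intro β hβ
  refine ⟨TH.epsc β, 128*(TH.Ac β + Real.sqrt 2), TH.eps_pos, ?_, ?_⟩
  · have h := TH.Ac_pos (β := β)
    have h2 : (0:ℝ) ≤ Real.sqrt 2 := Real.sqrt_nonneg 2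
    linarith
  intro D hD z hz adv V
  set J := ⌈Real.logb 2 D⌉₊ with hJ
  have hD0 : (0:ℝ) < D := by linarith
  have hlb : 0 ≤ Real.logb 2 D := Real.logb_nonneg (by norm_num) (le_of_lt hD)
  have hDJ : D ≤ (2:ℝ)^J := by
    have h1 : D = (2:ℝ) ^ (Real.logb 2 D) :=
      (Real.rpow_logb (by norm_num) (by norm_num) hD0).symm
    have h2 : (2:ℝ) ^ (Real.logb 2 D) ≤ (2:ℝ) ^ ((J:ℕ):ℝ) :=
      Real.rpow_le_rpow_of_exponent_le (by norm_num) (Nat.le_ceil _)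
    rw [Real.rpow_natCast] at h2
    linarith [h1 ▸ h2]
  have hJD : (2:ℝ)^J ≤ 2*D := by
    have h1 : ((J:ℕ):ℝ) ≤ Real.logb 2 D + 1 := le_of_lt (Nat.ceil_lt_add_one hlb)
    have h2 : (2:ℝ)^((J:ℕ):ℝ) ≤ (2:ℝ)^(Real.logb 2 D + 1) :=
      Real.rpow_le_rpow_of_exponent_le (by norm_num) h1
    rw [Real.rpow_natCast, Real.rpow_add (by norm_num), Real.rpow_one,
      Real.rpow_logb (by norm_num) (by norm_num) hD0] at h2
    linarith
  obtain ⟨nJ, hSnJ, hsumnJ⟩ := TH.phase hβ V J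
  have hside : (TH.bigSq J).2 = (2:ℝ)^(J+2) := rfl
  obtain ⟨m, hmn, hSm1, hposin, hsum, hfound⟩ :=
    TH.process hβ V (2^(J+2)) (TH.bigSq J) [] J nJ
      (by rw [hside]; push_cast; exact le_refl _) (by rw [hside]; positivity) hSnJ
  have hpw : (0:ℝ) < (2:ℝ)^J := by positivity
  have hzbox : z ∈ TH.box (TH.bigSq J) := by
    have hle : ∀ i : Fin 2, |z i| ≤ (2:ℝ)^(J+2)/2 := by
      intro i
      calc |z i| ≤ ‖z‖ := TH.coord_le_norm z i
        _ ≤ D := hz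
        _ ≤ (2:ℝ)^J := hDJ
        _ ≤ (2:ℝ)^(J+2)/2 := by
            have h4 : (2:ℝ)^(J+2) = 4*(2:ℝ)^J := by ring
            rw [h4]; linarith
    constructor
    · show |z 0 - (0:Pt) 0| ≤ (2:ℝ)^(J+2)/2
      rw [TH.pt_zero, sub_zero]; exact hle 0
    · show |z 1 - (0:Pt) 1| ≤ (2:ℝ)^(J+2)/2
      rw [TH.pt_zero, sub_zero]; exact hle 1
  obtain ⟨i, hi1, hi2, hi3⟩ := hfound hzbox
  refine ⟨i, pos TH.myStrat adv i, left_mem_segment ℝ _ _, hi3, ?_⟩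
  show (∑ l ∈ Finset.range i, dist (pos TH.myStrat adv l) (pos TH.myStrat adv (l+1)))
      + dist (pos TH.myStrat adv i) (pos TH.myStrat adv i) ≤ _
  rw [dist_self, add_zero]
  have hsub : Finset.Ico nJ i ⊆ Finset.Ico nJ m := Finset.Ico_subset_Ico le_rfl hi2
  have h4 : (∑ l ∈ Finset.Ico nJ i, dist (pos TH.myStrat adv l) (pos TH.myStrat adv (l+1)))
      ≤ ∑ l ∈ Finset.Ico nJ m, dist (pos TH.myStrat adv l) (pos TH.myStrat adv (l+1)) :=
    Finset.sum_le_sum_of_subset_of_nonneg hsub (fun _ _ _ => dist_nonneg)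
  have hsplit : (∑ l ∈ Finset.Ico 0 nJ, dist (pos TH.myStrat adv l) (pos TH.myStrat adv (l+1)))
      + (∑ l ∈ Finset.Ico nJ i, dist (pos TH.myStrat adv l) (pos TH.myStrat adv (l+1)))
      = ∑ l ∈ Finset.Ico 0 i, dist (pos TH.myStrat adv l) (pos TH.myStrat adv (l+1)) :=
    Finset.sum_Ico_consecutive _ (Nat.zero_le _) hi1
  simp only [← Finset.range_eq_Ico] at hsplit
  rw [hside] at hsum
  have htot := TH.total_bound hβ hD J hJD
  have hlast : (0:ℝ) ≤ Real.sqrt 2 * (2:ℝ)^(J+2) := by positivity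
  have hstep : (∑ j' ∈ Finset.range (J+1), (TH.Fc β ((2:ℝ)^(j'+2)) + Real.sqrt 2 * (2:ℝ)^(j'+2)))
      = (∑ j' ∈ Finset.range J, (TH.Fc β ((2:ℝ)^(j'+2)) + Real.sqrt 2 * (2:ℝ)^(j'+2)))
        + (TH.Fc β ((2:ℝ)^(J+2)) + Real.sqrt 2 * (2:ℝ)^(J+2)) := Finset.sum_range_succ _ _
  linarith
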